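/- Generalized rule R_a: for every n ≥ 1, all a₁, …, aₙ, a ∈ T, all L≻-formulas φ, γ₁, …, γₙ, γ: if →ⁿᵢ₌₁(I_{aᵢ⊙b}(γᵢ), I_{a⊙b}(γ)) is a theorem of LCR for every b ∈ T, then →ⁿᵢ₌₁(I_{aᵢ}(φ ≻ γᵢ), I_a(φ ≻ γ)) is a theorem of LCR. -/

import Mathlib

namespace LCR

/-- Łukasiewicz negation on ℝ. -/
noncomputable def lneg (a : ℝ) : ℝ := 1 - a

/-- Łukasiewicz implication on ℝ. -/
noncomputable def limp (a b : ℝ) : ℝ := min 1 (1 - a + b)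

/-- Łukasiewicz strong conjunction ⊙ on ℝ. -/
noncomputable def lodot (a b : ℝ) : ℝ := max 0 (a + b - 1)

/-- The truth-value set T = {0, 1/(m−1), …, 1}. -/
def Tset (m : ℕ) : Set ℝ := {a | ∃ i : Fin m, a = (i : ℝ) / ((m : ℝ) - 1)}

/-- The k-th truth value k/(m−1). -/
noncomputable def tv (m : ℕ) (k : Fin m) : ℝ := (k : ℝ) / ((m : ℝ) - 1)

/-- Formulas of the language L≻. -/
inductive Formula : Type where
  | var  : ℕ → Formula
  | neg  : Formula → Formula
  | imp  : Formula → Formula → Formula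
  | cond : Formula → Formula → Formula
deriving DecidableEq

namespace Formula
/-- φ ∨ ψ := (φ → ψ) → ψ. -/
def or (φ ψ : Formula) : Formula := .imp (.imp φ ψ) ψ
/-- φ ∧ ψ := ¬(¬φ ∨ ¬ψ). -/
def and (φ ψ : Formula) : Formula := .neg (Formula.or (.neg φ) (.neg ψ))
/-- φ ↔ ψ := (φ → ψ) ∧ (ψ → φ). -/
def iff (φ ψ : Formula) : Formula := Formula.and (.imp φ ψ) (.imp ψ φ)
end Formula

/-- Purely propositional (¬,→)-formulas. -/
inductive PForm : Type where
  | var : ℕ → PForm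
  | neg : PForm → PForm
  | imp : PForm → PForm → PForm

/-- Evaluation of a propositional formula under an assignment. -/
noncomputable def PForm.eval (σ : ℕ → ℝ) : PForm → ℝ
  | .var n => σ n
  | .neg φ => lneg (PForm.eval σ φ)
  | .imp φ ψ => limp (PForm.eval σ φ) (PForm.eval σ ψ)

/-- Tautology of Łukasiewicz m-valued propositional logic. -/
def PForm.Taut (m : ℕ) (φ : PForm) : Prop :=
  ∀ σ : ℕ → ℝ, (∀ n, σ n ∈ Tset m) → PForm.eval σ φ = 1

/-- Substitution of L≻-formulas for the variables of a propositional formula. -/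
def PForm.subst (σ : ℕ → Formula) : PForm → Formula
  | .var n => σ n
  | .neg φ => .neg (PForm.subst σ φ)
  | .imp φ ψ => .imp (PForm.subst σ φ) (PForm.subst σ ψ)

/-- `J` is a family of Rosser–Turquette J-operators: each `J a` is obtained by substitution
into a (¬,→)-definable one-place connective whose value is 1 at inputs equal to `tv m a`
and 0 at all other truth values. -/
def IsJFamily (m : ℕ) (J : Fin m → Formula → Formula) : Prop :=
  ∃ P : Fin m → PForm,
    (∀ a φ, J a φ = PForm.subst (fun _ => φ) (P a)) ∧
    (∀ (a : Fin m) (σ : ℕ → ℝ), (∀ n, σ n ∈ Tset m) →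
      PForm.eval σ (P a) = if σ 0 = tv m a then 1 else 0)

/-- `I` is a family of threshold operators: each `I a` is obtained by substitution into a
(¬,→)-definable one-place connective whose value is 1 at inputs ≥ `tv m a` and 0 otherwise. -/
def IsIFamily (m : ℕ) (I : Fin m → Formula → Formula) : Prop :=
  ∃ P : Fin m → PForm,
    (∀ a φ, I a φ = PForm.subst (fun _ => φ) (P a)) ∧
    (∀ (a : Fin m) (σ : ℕ → ℝ), (∀ n, σ n ∈ Tset m) →
      PForm.eval σ (P a) = if tv m a ≤ σ 0 then 1 else 0)

/-- The index of aᵢ = (m−i)/(m−1) for i = j+1, i.e. m−1−j. -/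
def revIdx {m : ℕ} (j : Fin m) : Fin m := ⟨m - 1 - j.1, by have := j.isLt; omega⟩

/-- Index-level strong conjunction: tv (odotIdx a b) = tv a ⊙ tv b. -/
def odotIdx {m : ℕ} (a b : Fin m) : Fin m :=
  ⟨a.1 + b.1 - (m - 1), by have := a.isLt; have := b.isLt; omega⟩

/-- Nested implication →ⁿᵢ₌₁(φᵢ, ψ) = φₙ → (φₙ₋₁ → (⋯ → (φ₁ → ψ))), with φᵢ = f (i−1). -/
def nestImp : (n : ℕ) → (Fin n → Formula) → Formula → Formula
  | 0, _, ψ => ψ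
  | n+1, f, ψ => .imp (f (Fin.last n)) (nestImp n (fun i => f i.castSucc) ψ)

/-- Theorems of the system LCR (relative to the I-operators used in the rules R_a). -/
inductive Thm (m : ℕ) (I : Fin m → Formula → Formula) : Formula → Prop where
  | taut : ∀ (ψ : PForm) (σ : ℕ → Formula), PForm.Taut m ψ → Thm m I (PForm.subst σ ψ)
  | a1 : ∀ φ ψ θ : Formula,
      Thm m I (.imp (.cond φ (ψ.and θ)) ((Formula.cond φ ψ).and (.cond φ θ)))
  | a2 : ∀ φ ψ θ : Formula,
      Thm m I (.imp ((Formula.cond φ ψ).and (.cond φ θ)) (.cond φ (ψ.and θ)))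
  | a3 : ∀ (φ : Formula) (p : ℕ), Thm m I (.cond φ (.imp (.var p) (.var p)))
  | mp : ∀ φ ψ : Formula, Thm m I (.imp φ ψ) → Thm m I φ → Thm m I ψ
  | rcea : ∀ φ ψ θ : Formula,
      Thm m I (φ.iff ψ) → Thm m I ((Formula.cond φ θ).iff (.cond ψ θ))
  | rcec : ∀ φ ψ θ : Formula,
      Thm m I (φ.iff ψ) → Thm m I ((Formula.cond θ φ).iff (.cond θ ψ))
  | ra : ∀ (a : Fin m) (φ : Formula) (γ : Fin m → Formula) (δ : Formula),
      (∀ b : Fin m,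
        Thm m I (nestImp m (fun j => I (odotIdx (revIdx j) b) (γ j)) (I (odotIdx a b) δ))) →
      Thm m I (nestImp m (fun j => I (revIdx j) (.cond φ (γ j))) (I a (.cond φ δ)))

/-- Γ ⊢_LCR φ : derivability from Γ by theorems of LCR and modus ponens. -/
inductive Deriv (m : ℕ) (I : Fin m → Formula → Formula) (Γ : Set Formula) : Formula → Prop where
  | thm : ∀ φ, Thm m I φ → Deriv m I Γ φ
  | mem : ∀ φ, φ ∈ Γ → Deriv m I Γ φ
  | mp : ∀ φ ψ, Deriv m I Γ (.imp φ ψ) → Deriv m I Γ φ → Deriv m I Γ ψ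

/-- A Kripke LCR model over a set of worlds W. -/
structure Model (m : ℕ) (W : Type) : Type where
  ne : Nonempty W
  R : (Fin m → Set W) → W → W → ℝ
  R_mem : ∀ X x y, R X x y ∈ Tset m
  v : ℕ → W → ℝ
  v_mem : ∀ p x, v p x ∈ Tset m

/-- Valuation of formulas in a Kripke LCR model. -/
noncomputable def Model.val {m : ℕ} {W : Type} (M : Model m W) : Formula → W → ℝ
  | .var p, x => M.v p x
  | .neg φ, x => lneg (M.val φ x)
  | .imp φ ψ, x => limp (M.val φ x) (M.val ψ x)
  | .cond φ ψ, x =>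
      sInf (Set.range fun y : W =>
        limp (M.R (fun i => {z : W | M.val φ z = tv m i}) x y) (M.val ψ y))

/-- Semantic consequence Γ ⊨ φ over all Kripke LCR models. -/
def Entails (m : ℕ) (Γ : Set Formula) (φ : Formula) : Prop :=
  ∀ (W : Type) (M : Model m W) (x : W), (∀ ψ ∈ Γ, M.val ψ x = 1) → M.val φ x = 1

/-- Syntactic consistency. -/
def Consistent (m : ℕ) (I : Fin m → Formula → Formula) (Γ : Set Formula) : Prop :=
  ¬ ∃ φ : Formula, Deriv m I Γ φ ∧ Deriv m I Γ (.neg φ)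

/-- Maximal consistency. -/
def MaxConsistent (m : ℕ) (I : Fin m → Formula → Formula) (Γ : Set Formula) : Prop :=
  Consistent m I Γ ∧ ∀ φ : Formula, Deriv m I Γ φ → φ ∈ Γ



section GR

/-! ### Auxiliary PForm machinery for the generalized rule -/

/-- PForm-level strong conjunction mirroring `Formula.and`. -/
def pand (p q : PForm) : PForm :=
  .neg (.imp (.imp (.neg p) (.neg q)) (.neg q))

/-- Conjunction of a list of variables (junk value on `[]`). -/
def pconjl : List ℕ → PForm
  | [] => .var 0
  | [i] => .var i
  | i :: is => pand (.var i) (pconjl is)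

/-- Substitution of PForms into a PForm. -/
def Psubst (τ : ℕ → PForm) : PForm → PForm
  | .var k => τ k
  | .neg p => .neg (Psubst τ p)
  | .imp p q => .imp (Psubst τ p) (Psubst τ q)

/-- PForm-level nested implication mirroring `nestImp`. -/
def pnest : (k : ℕ) → (Fin k → PForm) → PForm → PForm
  | 0, _, ψ => ψ
  | k+1, f, ψ => .imp (f (Fin.last k)) (pnest k (fun i => f i.castSucc) ψ)

/-- Formula-level conjunction of a list (junk value on `[]`). -/
def Fconj (g : ℕ → Formula) : List ℕ → Formula
  | [] => g 0
  | [i] => g i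
  | i :: is => (g i).and (Fconj g is)

lemma subst_Psubst (σ : ℕ → Formula) (τ : ℕ → PForm) :
    ∀ p, PForm.subst σ (Psubst τ p) = PForm.subst (fun k => PForm.subst σ (τ k)) p
  | .var k => rfl
  | .neg p => by simp [Psubst, PForm.subst, subst_Psubst σ τ p]
  | .imp p q => by simp [Psubst, PForm.subst, subst_Psubst σ τ p, subst_Psubst σ τ q]

lemma eval_Psubst (σ : ℕ → ℝ) (τ : ℕ → PForm) :
    ∀ p, PForm.eval σ (Psubst τ p) = PForm.eval (fun k => PForm.eval σ (τ k)) p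
  | .var k => rfl
  | .neg p => by simp [Psubst, PForm.eval, eval_Psubst σ τ p]
  | .imp p q => by simp [Psubst, PForm.eval, eval_Psubst σ τ p, eval_Psubst σ τ q]

lemma subst_pnest (σ : ℕ → Formula) :
    ∀ (k : ℕ) (f : Fin k → PForm) (ψ : PForm),
      PForm.subst σ (pnest k f ψ) = nestImp k (fun i => PForm.subst σ (f i)) (PForm.subst σ ψ)
  | 0, _, _ => rfl
  | k+1, f, ψ => by
      show Formula.imp _ _ = Formula.imp _ _
      rw [subst_pnest σ k (fun i => f i.castSucc) ψ]

lemma subst_pconjl (σ : ℕ → Formula) :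
    ∀ l, PForm.subst σ (pconjl l) = Fconj σ l
  | [] => rfl
  | [i] => rfl
  | i :: j :: is => by
      have ih := subst_pconjl σ (j :: is)
      show PForm.subst σ (pand (.var i) (pconjl (j :: is))) = (σ i).and (Fconj σ (j :: is))
      rw [show PForm.subst σ (pand (.var i) (pconjl (j :: is))) =
        (PForm.subst σ (.var i)).and (PForm.subst σ (pconjl (j :: is))) from rfl, ih]
      rfl

lemma Fconj_congr (g1 g2 : ℕ → Formula) :
    ∀ l, l ≠ [] → (∀ k ∈ l, g1 k = g2 k) → Fconj g1 l = Fconj g2 l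
  | [], h, _ => absurd rfl h
  | [i], _, hk => by simp [Fconj, hk i (by simp)]
  | i :: j :: is, _, hk => by
      have := Fconj_congr g1 g2 (j :: is) (by simp) (fun k hin => hk k (by simp [hin]))
      simp [Fconj, hk i (by simp), this]

/-! ### Real-number lemmas -/

lemma limp_le_one (a b : ℝ) : limp a b ≤ 1 := min_le_left _ _

lemma limp_eq_one {a b : ℝ} (h : a ≤ b) : limp a b = 1 := min_eq_left (by linarith)

lemma limp_one_left {b : ℝ} (h : b ≤ 1) : limp 1 b = b := by
  rw [limp]; rw [show (1:ℝ) - 1 + b = b by ring]; exact min_eq_right h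

lemma limp_zero_left {b : ℝ} (h : 0 ≤ b) : limp 0 b = 1 := by
  rw [limp]; exact min_eq_left (by linarith)

lemma limp_nonneg {a b : ℝ} (ha : a ≤ 1) (hb : 0 ≤ b) : 0 ≤ limp a b :=
  le_min (by norm_num) (by linarith)

lemma tv_mem {m : ℕ} (k : Fin m) : tv m k ∈ Tset m := ⟨k, rfl⟩

lemma mden_pos {m : ℕ} (hm : 2 ≤ m) : (0:ℝ) < (m:ℝ) - 1 := by
  have : (2:ℝ) ≤ (m:ℝ) := by exact_mod_cast hm
  linarith

lemma Tset_bounds {m : ℕ} (hm : 2 ≤ m) {x : ℝ} (hx : x ∈ Tset m) : 0 ≤ x ∧ x ≤ 1 := by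
  obtain ⟨i, rfl⟩ := hx
  have hc := mden_pos hm
  constructor
  · positivity
  · rw [div_le_one hc]
    have h1 : (i : ℕ) ≤ m - 1 := by omega
    have h2 : ((i : ℕ) : ℝ) ≤ ((m - 1 : ℕ) : ℝ) := by exact_mod_cast h1
    have h3 : ((m - 1 : ℕ) : ℝ) = (m:ℝ) - 1 := by
      have : 1 ≤ m := by omega
      push_cast [Nat.cast_sub this]; ring
    linarith [h2, h3.le, h3.ge]

lemma one_mem_Tset {m : ℕ} (hm : 2 ≤ m) : (1:ℝ) ∈ Tset m := by
  refine ⟨⟨m - 1, by omega⟩, ?_⟩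
  have hc := mden_pos hm
  have h3 : (((m - 1 : ℕ) : ℝ)) = (m:ℝ) - 1 := by
    have : 1 ≤ m := by omega
    push_cast [Nat.cast_sub this]; ring
  show (1:ℝ) = ((m - 1 : ℕ) : ℝ) / ((m:ℝ) - 1)
  rw [h3, div_self hc.ne']

lemma min_mem_Tset {m : ℕ} {x y : ℝ} (hx : x ∈ Tset m) (hy : y ∈ Tset m) :
    min x y ∈ Tset m := by
  obtain ⟨i, rfl⟩ := hx
  obtain ⟨j, rfl⟩ := hy
  rcases le_total ((i:ℝ) / ((m:ℝ)-1)) ((j:ℝ) / ((m:ℝ)-1)) with h | h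
  · exact ⟨i, min_eq_left h⟩
  · exact ⟨j, min_eq_right h⟩

lemma Tset_quant {m : ℕ} (hm : 2 ≤ m) {x y : ℝ} (hx : x ∈ Tset m) (hy : y ∈ Tset m)
    (h : x < y) : x + 1 / ((m:ℝ) - 1) ≤ y := by
  obtain ⟨i, rfl⟩ := hx
  obtain ⟨j, rfl⟩ := hy
  have hc := mden_pos hm
  have hij : (i:ℝ) < (j:ℝ) := by
    by_contra hcon
    push_neg at hcon
    exact absurd (div_le_div_of_nonneg_right hcon hc.le) (not_le.mpr h)
  have hij' : (i:ℕ) < (j:ℕ) := by exact_mod_cast hij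
  have h1 : (i:ℝ) + 1 ≤ (j:ℝ) := by exact_mod_cast hij'
  rw [← add_div]
  exact div_le_div_of_nonneg_right h1 hc.le

lemma eval_pand (σ : ℕ → ℝ) (p q : PForm) (hp : 0 ≤ PForm.eval σ p)
    (hq : 0 ≤ PForm.eval σ q) :
    PForm.eval σ (pand p q) = min (PForm.eval σ p) (PForm.eval σ q) := by
  show lneg (limp (limp (lneg (PForm.eval σ p)) (lneg (PForm.eval σ q)))
      (lneg (PForm.eval σ q))) = _
  simp only [limp, lneg, min_def]
  split_ifs <;> linarith

/-! ### pconjl evaluation -/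

lemma eval_pconjl_mem {m : ℕ} (hm : 2 ≤ m) (σ : ℕ → ℝ) (hσ : ∀ k, σ k ∈ Tset m) :
    ∀ l, l ≠ [] → PForm.eval σ (pconjl l) ∈ Tset m := by
  intro l
  induction l with
  | nil => intro h; exact absurd rfl h
  | cons i l ih =>
    intro _
    cases l with
    | nil => exact hσ i
    | cons j is =>
      have hmem := ih (by simp)
      have h0 : 0 ≤ PForm.eval σ (pconjl (j :: is)) := (Tset_bounds hm hmem).1
      rw [show pconjl (i :: j :: is) = pand (.var i) (pconjl (j :: is)) from rfl,
        eval_pand σ (.var i) (pconjl (j :: is)) (Tset_bounds hm (hσ i)).1 h0]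
      exact min_mem_Tset (hσ i) hmem

lemma eval_pconjl_le {m : ℕ} (hm : 2 ≤ m) (σ : ℕ → ℝ) (hσ : ∀ k, σ k ∈ Tset m) :
    ∀ l, ∀ k ∈ l, PForm.eval σ (pconjl l) ≤ σ k := by
  intro l
  induction l with
  | nil => intro k hk; simp at hk
  | cons i l ih =>
    intro k hk
    cases l with
    | nil =>
      rcases List.mem_singleton.mp hk with rfl
      exact le_rfl
    | cons j is =>
      have hmem := eval_pconjl_mem hm σ hσ (j :: is) (by simp)
      rw [show pconjl (i :: j :: is) = pand (.var i) (pconjl (j :: is)) from rfl,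
        eval_pand σ (.var i) (pconjl (j :: is)) (Tset_bounds hm (hσ i)).1 (Tset_bounds hm hmem).1]
      rcases List.mem_cons.mp hk with rfl | hk'
      · exact min_le_left _ _
      · exact (min_le_right _ _).trans (ih k hk')

lemma le_eval_pconjl {m : ℕ} (hm : 2 ≤ m) (σ : ℕ → ℝ) (hσ : ∀ k, σ k ∈ Tset m) (c : ℝ) :
    ∀ l, l ≠ [] → (∀ k ∈ l, c ≤ σ k) → c ≤ PForm.eval σ (pconjl l) := by
  intro l
  induction l with
  | nil => intro h; exact absurd rfl h
  | cons i l ih =>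
    intro _ hk
    cases l with
    | nil => exact hk i (by simp)
    | cons j is =>
      have hmem := eval_pconjl_mem hm σ hσ (j :: is) (by simp)
      rw [show pconjl (i :: j :: is) = pand (.var i) (pconjl (j :: is)) from rfl,
        eval_pand σ (.var i) (pconjl (j :: is)) (Tset_bounds hm (hσ i)).1 (Tset_bounds hm hmem).1]
      exact le_min (hk i (by simp)) (ih (by simp) (fun k hk' => hk k (by simp [hk'])))

/-! ### Papp : applying the I-connective pattern to a PForm argument -/

/-- Apply the defining PForm of the `c`-th I-operator to a PForm argument. -/
def Papp {m : ℕ} (P : Fin m → PForm) (c : Fin m) (q : PForm) : PForm :=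
  Psubst (fun _ => q) (P c)

lemma subst_Papp {m : ℕ} (P : Fin m → PForm) {I : Fin m → Formula → Formula}
    (hP1 : ∀ a φ, I a φ = PForm.subst (fun _ => φ) (P a)) (σ : ℕ → Formula)
    (c : Fin m) (q : PForm) :
    PForm.subst σ (Papp P c q) = I c (PForm.subst σ q) := by
  rw [Papp, subst_Psubst]
  exact (hP1 c (PForm.subst σ q)).symm

lemma eval_Papp {m : ℕ} (P : Fin m → PForm)
    (hP2 : ∀ (c : Fin m) (σ : ℕ → ℝ), (∀ k, σ k ∈ Tset m) →
      PForm.eval σ (P c) = if tv m c ≤ σ 0 then 1 else 0)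
    (σ : ℕ → ℝ) (c : Fin m) (q : PForm) (hq : PForm.eval σ q ∈ Tset m) :
    PForm.eval σ (Papp P c q) = if tv m c ≤ PForm.eval σ q then 1 else 0 := by
  rw [Papp, eval_Psubst]
  exact hP2 c _ (fun _ => hq)

/-! ### pnest evaluation -/

lemma pnest_all_one (σ : ℕ → ℝ) :
    ∀ (k : ℕ) (f : Fin k → PForm) (ψ : PForm),
      (∀ i, PForm.eval σ (f i) = 1) → PForm.eval σ ψ ≤ 1 →
      PForm.eval σ (pnest k f ψ) = PForm.eval σ ψ
  | 0, _, _, _, _ => rfl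
  | k+1, f, ψ, hf, hψ => by
      have ih := pnest_all_one σ k (fun i => f i.castSucc) ψ (fun i => hf _) hψ
      show limp (PForm.eval σ (f (Fin.last k))) _ = _
      rw [hf (Fin.last k), ih, limp_one_left hψ]

lemma pnest_bounds (σ : ℕ → ℝ) :
    ∀ (k : ℕ) (f : Fin k → PForm) (ψ : PForm),
      (∀ i, 0 ≤ PForm.eval σ (f i) ∧ PForm.eval σ (f i) ≤ 1) →
      0 ≤ PForm.eval σ ψ → PForm.eval σ ψ ≤ 1 →
      0 ≤ PForm.eval σ (pnest k f ψ) ∧ PForm.eval σ (pnest k f ψ) ≤ 1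
  | 0, _, _, _, h0, h1 => ⟨h0, h1⟩
  | k+1, f, ψ, hf, h0, h1 => by
      have ih := pnest_bounds σ k (fun i => f i.castSucc) ψ (fun i => hf _) h0 h1
      constructor
      · exact limp_nonneg (hf (Fin.last k)).2 ih.1
      · exact limp_le_one _ _

lemma pnest_ne_one (σ : ℕ → ℝ) :
    ∀ (k : ℕ) (f : Fin k → PForm) (ψ : PForm),
      (∀ i, PForm.eval σ (f i) = 0 ∨ PForm.eval σ (f i) = 1) →
      0 ≤ PForm.eval σ ψ → PForm.eval σ ψ ≤ 1 →
      PForm.eval σ (pnest k f ψ) ≠ 1 →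
      (∀ i, PForm.eval σ (f i) = 1) ∧ PForm.eval σ ψ ≠ 1
  | 0, f, ψ, _, _, _, h => ⟨fun i => i.elim0, h⟩
  | k+1, f, ψ, hf, h0, h1, h => by
      have hbounds := pnest_bounds σ k (fun i => f i.castSucc) ψ
        (fun i => by rcases hf i.castSucc with h' | h' <;> rw [h'] <;> norm_num) h0 h1
      have heq : PForm.eval σ (pnest (k+1) f ψ) =
          limp (PForm.eval σ (f (Fin.last k)))
            (PForm.eval σ (pnest k (fun i => f i.castSucc) ψ)) := rfl
      rcases hf (Fin.last k) with hlast | hlast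
      · exfalso
        apply h
        rw [heq, hlast, limp_zero_left hbounds.1]
      · have hrest : PForm.eval σ (pnest k (fun i => f i.castSucc) ψ) ≠ 1 := by
          intro hcon
          apply h
          rw [heq, hlast, hcon, limp_one_left le_rfl]
        have ih := pnest_ne_one σ k (fun i => f i.castSucc) ψ (fun i => hf _) h0 h1 hrest
        refine ⟨fun i => ?_, ih.2⟩
        refine Fin.lastCases ?_ ?_ i
        · exact hlast
        · exact fun i' => ih.1 i'

/-! ### fold of implications : lower bound -/

lemma eval_foldr_imp (σ : ℕ → ℝ) :
    ∀ (l : List PForm) (ψ : PForm),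
      (∀ p ∈ l, PForm.eval σ p ≤ 1) →
      0 ≤ PForm.eval σ ψ → PForm.eval σ ψ ≤ 1 →
      min 1 ((l.map (fun p => 1 - PForm.eval σ p)).sum + PForm.eval σ ψ) ≤
          PForm.eval σ (l.foldr .imp ψ) ∧ PForm.eval σ (l.foldr .imp ψ) ≤ 1
  | [], ψ, _, h0, h1 => by
      refine ⟨?_, h1⟩
      simpa using min_le_right 1 (PForm.eval σ ψ)
  | p :: l, ψ, hl, h0, h1 => by
      have ih := eval_foldr_imp σ l ψ (fun q hq => hl q (by simp [hq])) h0 h1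
      have hp1 : PForm.eval σ p ≤ 1 := hl p (by simp)
      have heq : PForm.eval σ ((p :: l).foldr .imp ψ) =
          limp (PForm.eval σ p) (PForm.eval σ (l.foldr .imp ψ)) := rfl
      rw [heq]
      refine ⟨?_, limp_le_one _ _⟩
      rw [List.map_cons, List.sum_cons]
      set S := (l.map (fun p => 1 - PForm.eval σ p)).sum + PForm.eval σ ψ with hS
      rcases le_or_gt 1 S with hc | hc
      · have h11 : PForm.eval σ (l.foldr .imp ψ) = 1 :=
          le_antisymm ih.2 (le_trans (by rw [min_eq_left hc]) ih.1)
        rw [limp, h11]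
        exact min_le_left _ _ |>.trans_eq (min_eq_left (by linarith)).symm |>.trans le_rfl
      · have hge : S ≤ PForm.eval σ (l.foldr .imp ψ) :=
          le_trans (by rw [min_eq_right hc.le]) ih.1
        rw [limp]
        exact min_le_min le_rfl (by linarith)

lemma thm_foldr_discharge {m : ℕ} {I : Fin m → Formula → Formula} (σ : ℕ → Formula) :
    ∀ (l : List PForm) (ψ : PForm),
      Thm m I (PForm.subst σ (l.foldr .imp ψ)) →
      (∀ p ∈ l, Thm m I (PForm.subst σ p)) → Thm m I (PForm.subst σ ψ)
  | [], ψ, h, _ => h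
  | p :: l, ψ, h, hl =>
      thm_foldr_discharge σ l ψ
        (Thm.mp _ _ h (hl p (by simp)))
        (fun q hq => hl q (by simp [hq]))

/-! ### Small propositional tautologies and Hilbert helpers -/

def tpTrans : PForm :=
  .imp (.imp (.var 0) (.var 1)) (.imp (.imp (.var 1) (.var 2)) (.imp (.var 0) (.var 2)))

def tpK : PForm :=
  .imp (.imp (.var 0) (.var 1)) (.imp (pand (.var 2) (.var 0)) (pand (.var 2) (.var 1)))

lemma taut_tpId {m : ℕ} (i : ℕ) : PForm.Taut m (.imp (.var i) (.var i)) := by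
  intro σ hσ
  exact limp_eq_one le_rfl

lemma taut_tpTrans {m : ℕ} (hm : 2 ≤ m) : PForm.Taut m tpTrans := by
  intro σ hσ
  obtain ⟨h0a, h0b⟩ := Tset_bounds hm (hσ 0)
  obtain ⟨h1a, h1b⟩ := Tset_bounds hm (hσ 1)
  obtain ⟨h2a, h2b⟩ := Tset_bounds hm (hσ 2)
  show limp (limp (σ 0) (σ 1)) (limp (limp (σ 1) (σ 2)) (limp (σ 0) (σ 2))) = 1
  simp only [limp, min_def]
  split_ifs <;> linarith

lemma taut_tpK {m : ℕ} (hm : 2 ≤ m) : PForm.Taut m tpK := by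
  intro σ hσ
  obtain ⟨h0a, h0b⟩ := Tset_bounds hm (hσ 0)
  obtain ⟨h1a, h1b⟩ := Tset_bounds hm (hσ 1)
  obtain ⟨h2a, h2b⟩ := Tset_bounds hm (hσ 2)
  show limp (limp (σ 0) (σ 1))
      (limp (PForm.eval σ (pand (.var 2) (.var 0))) (PForm.eval σ (pand (.var 2) (.var 1)))) = 1
  rw [eval_pand σ (.var 2) (.var 0) h2a h0a, eval_pand σ (.var 2) (.var 1) h2a h1a]
  show limp (limp (σ 0) (σ 1)) (limp (min (σ 2) (σ 0)) (min (σ 2) (σ 1))) = 1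
  simp only [limp, min_def]
  split_ifs <;> linarith

lemma thm_trans {m : ℕ} {I : Fin m → Formula → Formula} (hm : 2 ≤ m) {X Y Z : Formula}
    (h1 : Thm m I (.imp X Y)) (h2 : Thm m I (.imp Y Z)) : Thm m I (.imp X Z) := by
  have ht := Thm.taut (m := m) (I := I) tpTrans
    (fun k => if k = 0 then X else if k = 1 then Y else Z) (taut_tpTrans hm)
  have he : PForm.subst (fun k => if k = 0 then X else if k = 1 then Y else Z) tpTrans =
      .imp (.imp X Y) (.imp (.imp Y Z) (.imp X Z)) := rfl
  rw [he] at ht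
  exact Thm.mp _ _ (Thm.mp _ _ ht h1) h2

/-- Iterated A2: from the conjunction of the `φ ≻ γᵢ` to `φ ≻ ⋀γᵢ`. -/
lemma conj_chain {m : ℕ} {I : Fin m → Formula → Formula} (hm : 2 ≤ m)
    (g : ℕ → Formula) (φ : Formula) :
    ∀ l, l ≠ [] →
      Thm m I (.imp (Fconj (fun k => .cond φ (g k)) l) (.cond φ (Fconj g l)))
  | [], h => absurd rfl h
  | [i], _ => by
      have := Thm.taut (m := m) (I := I) (.imp (.var 0) (.var 0))
        (fun _ => .cond φ (g i)) (taut_tpId 0)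
      exact this
  | i :: j :: is, _ => by
      have ih := conj_chain (I := I) hm g φ (j :: is) (by simp)
      have hK := Thm.taut (m := m) (I := I) tpK
        (fun k => if k = 0 then Fconj (fun k' => .cond φ (g k')) (j :: is)
          else if k = 1 then .cond φ (Fconj g (j :: is)) else .cond φ (g i)) (taut_tpK hm)
      have he : PForm.subst (fun k => if k = 0 then Fconj (fun k' => .cond φ (g k')) (j :: is)
          else if k = 1 then .cond φ (Fconj g (j :: is)) else .cond φ (g i)) tpK =
          .imp (.imp (Fconj (fun k' => .cond φ (g k')) (j :: is)) (.cond φ (Fconj g (j :: is))))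
            (.imp ((Formula.cond φ (g i)).and (Fconj (fun k' => .cond φ (g k')) (j :: is)))
              ((Formula.cond φ (g i)).and (.cond φ (Fconj g (j :: is))))) := rfl
  
      rw [he] at hK
      have h2 := Thm.mp _ _ hK ih
      have h3 := Thm.a2 (m := m) (I := I) φ (g i) (Fconj g (j :: is))
      have hshape1 : Fconj (fun k' => .cond φ (g k')) (i :: j :: is) =
          (Formula.cond φ (g i)).and (Fconj (fun k' => .cond φ (g k')) (j :: is)) := rfl
      have hshape2 : Fconj g (i :: j :: is) = (g i).and (Fconj g (j :: is)) := rfl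
      rw [hshape1, hshape2]
      exact thm_trans hm h2 h3

/-! ### The concrete substitutions and class lists -/

lemma revIdx_revIdx {m : ℕ} (j : Fin m) : revIdx (revIdx j) = j := by
  have := j.isLt
  apply Fin.ext
  simp [revIdx]
  omega

/-- First substitution: γ's, then δ, then a fresh variable. -/
def sigF (n : ℕ) (γ : Fin n → Formula) (δ : Formula) (k : ℕ) : Formula :=
  if h : k < n then γ ⟨k, h⟩ else if k = n then δ else .var 0

/-- The list of (values of) indices i with as i = revIdx j. -/
def clsL {n m : ℕ} (as : Fin n → Fin m) (j : Fin m) : List ℕ :=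
  ((List.finRange n).filter (fun i => as i = revIdx j)).map Fin.val

/-- The PForm argument used for the j-th antecedent of the instance of R_a. -/
def qPF {n m : ℕ} (as : Fin n → Fin m) (j : Fin m) : PForm :=
  if clsL as j = [] then .imp (.var (n+1)) (.var (n+1)) else pconjl (clsL as j)

/-- The j-th hypothesis pattern for the final transfer. -/
def hypPF {n m : ℕ} (as : Fin n → Fin m) (j : Fin m) : PForm :=
  if clsL as j = [] then .var (n+1+j) else .imp (pconjl (clsL as j)) (.var (n+1+j))

/-- Second substitution: the conditionals. -/
def sigF2 (n : ℕ) {m : ℕ} (γ : Fin n → Formula) (γ' : Fin m → Formula)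
    (φ δ : Formula) (k : ℕ) : Formula :=
  if h : k < n then .cond φ (γ ⟨k, h⟩) else if k = n then .cond φ δ
  else if h2 : k - (n+1) < m then .cond φ (γ' ⟨k - (n+1), h2⟩) else .var 0

lemma mem_clsL {n m : ℕ} (as : Fin n → Fin m) (j : Fin m) (k : ℕ) :
    k ∈ clsL as j ↔ ∃ i : Fin n, as i = revIdx j ∧ (i : ℕ) = k := by
  simp [clsL, List.mem_map, List.mem_filter, List.mem_finRange]

/-! ### The two big tautologies -/

lemma bigb_taut {m : ℕ} (hm : 2 ≤ m) (P : Fin m → PForm)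
    (hP2 : ∀ (c : Fin m) (σ : ℕ → ℝ), (∀ k, σ k ∈ Tset m) →
      PForm.eval σ (P c) = if tv m c ≤ σ 0 then 1 else 0)
    {n : ℕ} (as : Fin n → Fin m) (a b : Fin m) :
    PForm.Taut m (.imp
      (pnest n (fun i => Papp P (odotIdx (as i) b) (.var i.1)) (Papp P (odotIdx a b) (.var n)))
      (pnest m (fun j => Papp P (odotIdx (revIdx j) b) (qPF as j))
        (Papp P (odotIdx a b) (.var n)))) := by
  intro σ hσ
  have hσ' : ∀ k, σ k ∈ Tset m := fun k => hσ k
  have hq : ∀ j : Fin m, PForm.eval σ (qPF as j) ∈ Tset m := by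
    intro j
    by_cases hc : clsL as j = []
    · rw [qPF, if_pos hc]
      have : PForm.eval σ (.imp (.var (n+1)) (.var (n+1))) = 1 := limp_eq_one le_rfl
      rw [this]; exact one_mem_Tset hm
    · rw [qPF, if_neg hc]
      exact eval_pconjl_mem hm σ hσ' _ hc
  have hE : ∀ i : Fin n,
      PForm.eval σ (Papp P (odotIdx (as i) b) (.var i.1)) =
        if tv m (odotIdx (as i) b) ≤ σ i.1 then 1 else 0 :=
    fun i => eval_Papp P hP2 σ _ _ (hσ' i.1)
  have hD : ∀ j : Fin m,
      PForm.eval σ (Papp P (odotIdx (revIdx j) b) (qPF as j)) =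
        if tv m (odotIdx (revIdx j) b) ≤ PForm.eval σ (qPF as j) then 1 else 0 :=
    fun j => eval_Papp P hP2 σ _ _ (hq j)
  have hT : PForm.eval σ (Papp P (odotIdx a b) (.var n)) =
      if tv m (odotIdx a b) ≤ σ n then 1 else 0 :=
    eval_Papp P hP2 σ _ _ (hσ' n)
  have hEb : ∀ i : Fin n, PForm.eval σ (Papp P (odotIdx (as i) b) (.var i.1)) = 0 ∨
      PForm.eval σ (Papp P (odotIdx (as i) b) (.var i.1)) = 1 := by
    intro i; rw [hE i]; split <;> simp
  have hDb : ∀ j : Fin m, PForm.eval σ (Papp P (odotIdx (revIdx j) b) (qPF as j)) = 0 ∨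
      PForm.eval σ (Papp P (odotIdx (revIdx j) b) (qPF as j)) = 1 := by
    intro j; rw [hD j]; split <;> simp
  have hTb : PForm.eval σ (Papp P (odotIdx a b) (.var n)) = 0 ∨
      PForm.eval σ (Papp P (odotIdx a b) (.var n)) = 1 := by
    rw [hT]; split <;> simp
  have hT0 : 0 ≤ PForm.eval σ (Papp P (odotIdx a b) (.var n)) := by
    rcases hTb with h | h <;> rw [h] <;> norm_num
  have hT1 : PForm.eval σ (Papp P (odotIdx a b) (.var n)) ≤ 1 := by
    rcases hTb with h | h <;> rw [h] <;> norm_num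
  have hLbounds := pnest_bounds σ n (fun i => Papp P (odotIdx (as i) b) (.var i.1))
    (Papp P (odotIdx a b) (.var n))
    (fun i => by rcases hEb i with h | h <;> rw [h] <;> norm_num) hT0 hT1
  have hRbounds := pnest_bounds σ m (fun j => Papp P (odotIdx (revIdx j) b) (qPF as j))
    (Papp P (odotIdx a b) (.var n))
    (fun j => by rcases hDb j with h | h <;> rw [h] <;> norm_num) hT0 hT1
  show limp (PForm.eval σ (pnest n _ _)) (PForm.eval σ (pnest m _ _)) = 1
  by_cases hR : PForm.eval σ (pnest m (fun j => Papp P (odotIdx (revIdx j) b) (qPF as j))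
      (Papp P (odotIdx a b) (.var n))) = 1
  · rw [hR]
    exact limp_eq_one hLbounds.2
  · obtain ⟨hallD, htne⟩ := pnest_ne_one σ m _ _ hDb hT0 hT1 hR
    have ht0 : PForm.eval σ (Papp P (odotIdx a b) (.var n)) = 0 := by
      rcases hTb with h | h
      · exact h
      · exact absurd h htne
    have hallE : ∀ i : Fin n,
        PForm.eval σ (Papp P (odotIdx (as i) b) (.var i.1)) = 1 := by
      intro i
      have hDi := hallD (revIdx (as i))
      rw [hD (revIdx (as i)), revIdx_revIdx (as i)] at hDi
      have hcls : (i : ℕ) ∈ clsL as (revIdx (as i)) :=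
        (mem_clsL as _ _).mpr ⟨i, (revIdx_revIdx (as i)).symm, rfl⟩
      have hne : clsL as (revIdx (as i)) ≠ [] := List.ne_nil_of_mem hcls
      have hcond : tv m (odotIdx (as i) b) ≤ PForm.eval σ (qPF as (revIdx (as i))) := by
        by_contra hcon
        rw [if_neg hcon] at hDi
        norm_num at hDi
      have hle : PForm.eval σ (qPF as (revIdx (as i))) ≤ σ i.1 := by
        rw [qPF, if_neg hne]
        exact eval_pconjl_le hm σ hσ' _ _ hcls
      rw [hE i, if_pos (hcond.trans hle)]
    have hL : PForm.eval σ (pnest n (fun i => Papp P (odotIdx (as i) b) (.var i.1))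
        (Papp P (odotIdx a b) (.var n))) = 0 := by
      rw [pnest_all_one σ n _ _ hallE hT1, ht0]
    rw [hL]
    exact limp_zero_left hRbounds.1

lemma one_le_sum_rep {m : ℕ} (hm : 2 ≤ m) (F : PForm → ℝ) (g : Fin m → PForm)
    (hF : ∀ j : Fin m, 0 ≤ F (g j)) (j0 : Fin m) (hj0 : 1 / ((m:ℝ) - 1) ≤ F (g j0)) :
    1 ≤ ((((List.finRange m).flatMap (fun j => List.replicate (m-1) (g j))).map F).sum) := by
  have key : ∀ L : List (Fin m),
      ((L.flatMap (fun j => List.replicate (m-1) (g j))).map F).sum =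
        (L.map (fun j => ((m-1 : ℕ) : ℝ) * F (g j))).sum := by
    intro L
    induction L with
    | nil => simp
    | cons j L ih =>
      simp only [List.flatMap_cons, List.map_append, List.sum_append, ih,
        List.map_replicate, List.sum_replicate, List.map_cons, List.sum_cons, nsmul_eq_mul]
  rw [key]
  have hsingle : ((m-1 : ℕ) : ℝ) * F (g j0) ≤
      ((List.finRange m).map (fun j : Fin m => ((m-1 : ℕ) : ℝ) * F (g j))).sum := by
    apply List.single_le_sum
    · intro x hx
      obtain ⟨j, _, rfl⟩ := List.mem_map.mp hx
      exact mul_nonneg (by positivity) (hF j)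
    · exact List.mem_map.mpr ⟨j0, List.mem_finRange j0, rfl⟩
  have hcast : ((m-1 : ℕ) : ℝ) = (m:ℝ) - 1 := by
    have : 1 ≤ m := by omega
    push_cast [Nat.cast_sub this]; ring
  have h1 : (1:ℝ) ≤ ((m-1 : ℕ) : ℝ) * F (g j0) := by
    rw [hcast]
    have hc := mden_pos hm
    calc (1:ℝ) = ((m:ℝ) - 1) * (1 / ((m:ℝ) - 1)) := by field_simp
    _ ≤ ((m:ℝ) - 1) * F (g j0) := by
        exact mul_le_mul_of_nonneg_left hj0 hc.le
  exact h1.trans hsingle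

lemma theta_taut {m : ℕ} (hm : 2 ≤ m) (P : Fin m → PForm)
    (hP2 : ∀ (c : Fin m) (σ : ℕ → ℝ), (∀ k, σ k ∈ Tset m) →
      PForm.eval σ (P c) = if tv m c ≤ σ 0 then 1 else 0)
    (n : ℕ) (as : Fin n → Fin m) (a : Fin m) :
    PForm.Taut m
      (((List.finRange m).flatMap (fun j => List.replicate (m-1) (hypPF as j))).foldr .imp
        (.imp (pnest m (fun j => Papp P (revIdx j) (.var (n+1+j))) (Papp P a (.var n)))
          (pnest n (fun i => Papp P (as i) (.var i.1)) (Papp P a (.var n))))) := by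
  intro σ hσ
  have hσ' : ∀ k, σ k ∈ Tset m := fun k => hσ k
  have hb : ∀ k, 0 ≤ σ k ∧ σ k ≤ 1 := fun k => Tset_bounds hm (hσ' k)
  have hD : ∀ j : Fin m, PForm.eval σ (Papp P (revIdx j) (.var (n+1+j))) =
      if tv m (revIdx j) ≤ σ (n+1+j) then 1 else 0 :=
    fun j => eval_Papp P hP2 σ _ _ (hσ' (n+1+j))
  have hA : ∀ i : Fin n, PForm.eval σ (Papp P (as i) (.var i.1)) =
      if tv m (as i) ≤ σ i.1 then 1 else 0 :=
    fun i => eval_Papp P hP2 σ _ _ (hσ' i.1)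
  have hT : PForm.eval σ (Papp P a (.var n)) = if tv m a ≤ σ n then 1 else 0 :=
    eval_Papp P hP2 σ _ _ (hσ' n)
  have hDb : ∀ j : Fin m, PForm.eval σ (Papp P (revIdx j) (.var (n+1+j))) = 0 ∨
      PForm.eval σ (Papp P (revIdx j) (.var (n+1+j))) = 1 := by
    intro j; rw [hD j]; split <;> simp
  have hAb : ∀ i : Fin n, PForm.eval σ (Papp P (as i) (.var i.1)) = 0 ∨
      PForm.eval σ (Papp P (as i) (.var i.1)) = 1 := by
    intro i; rw [hA i]; split <;> simp
  have hTb : PForm.eval σ (Papp P a (.var n)) = 0 ∨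
      PForm.eval σ (Papp P a (.var n)) = 1 := by
    rw [hT]; split <;> simp
  have hT0 : 0 ≤ PForm.eval σ (Papp P a (.var n)) := by
    rcases hTb with h | h <;> rw [h] <;> norm_num
  have hT1 : PForm.eval σ (Papp P a (.var n)) ≤ 1 := by
    rcases hTb with h | h <;> rw [h] <;> norm_num
  have hCbounds := pnest_bounds σ m (fun j => Papp P (revIdx j) (.var (n+1+j)))
    (Papp P a (.var n))
    (fun j => by rcases hDb j with h | h <;> rw [h] <;> norm_num) hT0 hT1
  have hTbounds := pnest_bounds σ n (fun i => Papp P (as i) (.var i.1))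
    (Papp P a (.var n))
    (fun i => by rcases hAb i with h | h <;> rw [h] <;> norm_num) hT0 hT1
  have hhyp_le : ∀ j : Fin m, PForm.eval σ (hypPF as j) ≤ 1 := by
    intro j
    by_cases hc : clsL as j = []
    · rw [hypPF, if_pos hc]
      exact (hb (n+1+j)).2
    · rw [hypPF, if_neg hc]
      exact limp_le_one _ _
  have hmemle : ∀ p ∈ (List.finRange m).flatMap (fun j => List.replicate (m-1) (hypPF as j)),
      PForm.eval σ p ≤ 1 := by
    intro p hp
    obtain ⟨j, _, hp'⟩ := List.mem_flatMap.mp hp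
    rw [List.eq_of_mem_replicate hp']
    exact hhyp_le j
  set inner : PForm := .imp (pnest m (fun j => Papp P (revIdx j) (.var (n+1+j))) (Papp P a (.var n)))
    (pnest n (fun i => Papp P (as i) (.var i.1)) (Papp P a (.var n))) with hinner
  have hinner_eq : PForm.eval σ inner =
      limp (PForm.eval σ (pnest m (fun j => Papp P (revIdx j) (.var (n+1+j))) (Papp P a (.var n))))
        (PForm.eval σ (pnest n (fun i => Papp P (as i) (.var i.1)) (Papp P a (.var n)))) := rfl
  have hinner0 : 0 ≤ PForm.eval σ inner := by
    rw [hinner_eq]; exact limp_nonneg hCbounds.2 hTbounds.1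
  have hinner1 : PForm.eval σ inner ≤ 1 := by
    rw [hinner_eq]; exact limp_le_one _ _
  have hfold := eval_foldr_imp σ
    ((List.finRange m).flatMap (fun j => List.replicate (m-1) (hypPF as j))) inner
    hmemle hinner0 hinner1
  have hsum_ge : 1 ≤
      ((((List.finRange m).flatMap (fun j => List.replicate (m-1) (hypPF as j))).map
        (fun p => 1 - PForm.eval σ p)).sum) + PForm.eval σ inner := by
    by_cases hCT : PForm.eval σ inner = 1
    · have hnn : 0 ≤ (((List.finRange m).flatMap
          (fun j => List.replicate (m-1) (hypPF as j))).map
          (fun p => 1 - PForm.eval σ p)).sum := by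
        apply List.sum_nonneg
        intro x hx
        obtain ⟨p, hp, rfl⟩ := List.mem_map.mp hx
        linarith [hmemle p hp]
      linarith
    · -- bad case
      have hTne : PForm.eval σ (pnest n (fun i => Papp P (as i) (.var i.1))
          (Papp P a (.var n))) ≠ 1 := by
        intro hcon
        apply hCT
        rw [hinner_eq, hcon]
        exact limp_eq_one hCbounds.2
      obtain ⟨hallA, htne⟩ := pnest_ne_one σ n _ _ hAb hT0 hT1 hTne
      have ht0 : PForm.eval σ (Papp P a (.var n)) = 0 := by
        rcases hTb with h | h
        · exact h
        · exact absurd h htne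
      have hCone : PForm.eval σ (pnest m (fun j => Papp P (revIdx j) (.var (n+1+j)))
          (Papp P a (.var n))) = 1 := by
        rcases (by
          rcases pnest_bounds σ m (fun j => Papp P (revIdx j) (.var (n+1+j)))
            (Papp P a (.var n))
            (fun j => by rcases hDb j with h | h <;> rw [h] <;> norm_num) hT0 hT1 with ⟨x1, x2⟩
          exact ⟨x1, x2⟩ : 0 ≤ PForm.eval σ (pnest m (fun j => Papp P (revIdx j) (.var (n+1+j)))
            (Papp P a (.var n))) ∧ PForm.eval σ (pnest m (fun j => Papp P (revIdx j) (.var (n+1+j)))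
            (Papp P a (.var n))) ≤ 1) with ⟨hx1, hx2⟩
        by_contra hcon
        apply hCT
        rw [hinner_eq, show PForm.eval σ (pnest m (fun j => Papp P (revIdx j) (.var (n+1+j)))
          (Papp P a (.var n))) = 0 from ?_]
        · exact limp_zero_left hTbounds.1
        · -- pnest value is 0 or 1; if not 1 then... use pnest_ne_one? no: value could be in between?
          -- bool val: use ne_one to derive all-D and then all-one gives value ht0 = 0
          obtain ⟨hallD', _⟩ := pnest_ne_one σ m _ _ hDb hT0 hT1 hcon
          rw [pnest_all_one σ m _ _ hallD' hT1, ht0]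
      -- ∃ j0 with D j0 = 0
      have hex : ∃ j0 : Fin m, ¬ (tv m (revIdx j0) ≤ σ (n+1+j0)) := by
        by_contra hcon
        push_neg at hcon
        have hallD : ∀ j : Fin m, PForm.eval σ (Papp P (revIdx j) (.var (n+1+j))) = 1 := by
          intro j; rw [hD j, if_pos (hcon j)]
        have := pnest_all_one σ m (fun j => Papp P (revIdx j) (.var (n+1+j)))
          (Papp P a (.var n)) hallD hT1
        rw [this, ht0] at hCone
        norm_num at hCone
      obtain ⟨j0, hj0⟩ := hex
      push_neg at hj0
      -- key bound on hyp j0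
      have hkey : 1 / ((m:ℝ) - 1) ≤ 1 - PForm.eval σ (hypPF as j0) := by
        have htv1 : tv m (revIdx j0) ≤ 1 := (Tset_bounds hm (tv_mem (revIdx j0))).2
        by_cases hc : clsL as j0 = []
        · rw [hypPF, if_pos hc]
          have hq := Tset_quant hm (hσ' (n+1+j0)) (one_mem_Tset hm) (lt_of_lt_of_le hj0 htv1)
          show 1 / ((m:ℝ) - 1) ≤ 1 - σ (n+1+j0)
          linarith
        · rw [hypPF, if_neg hc]
          have hge : tv m (revIdx j0) ≤ PForm.eval σ (pconjl (clsL as j0)) := by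
            apply le_eval_pconjl hm σ hσ' _ _ hc
            intro k hk
            obtain ⟨i, hi1, hi2⟩ := (mem_clsL as j0 k).mp hk
            have := hallA i
            rw [hA i] at this
            have hcond : tv m (as i) ≤ σ i.1 := by
              by_contra hcon
              rw [if_neg hcon] at this
              norm_num at this
            rw [hi1, hi2] at hcond
            exact hcond
          have hq := Tset_quant hm (hσ' (n+1+j0)) (tv_mem (revIdx j0)) hj0
          have hval : PForm.eval σ (.imp (pconjl (clsL as j0)) (.var (n+1+j0))) =
              limp (PForm.eval σ (pconjl (clsL as j0))) (σ (n+1+j0)) := rfl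
          rw [hval, limp]
          have : min 1 (1 - PForm.eval σ (pconjl (clsL as j0)) + σ (n+1+j0)) ≤
              1 - PForm.eval σ (pconjl (clsL as j0)) + σ (n+1+j0) := min_le_right _ _
          linarith
      have hsum1 := one_le_sum_rep hm (fun p => 1 - PForm.eval σ p) (hypPF as)
        (fun j => by simpa using hhyp_le j) j0 hkey
      linarith
  -- conclude
  refine le_antisymm hfold.2 ?_
  refine le_trans ?_ hfold.1
  rw [min_eq_left hsum_ge]

end GR

/-- generalized rule R_a: for every n ≥ 1 and arbitrary a₁,…,aₙ,a ∈ T,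
if →ⁿᵢ₌₁(I_{aᵢ⊙b}(γᵢ), I_{a⊙b}(γ)) is a theorem for every b ∈ T, then
→ⁿᵢ₌₁(I_{aᵢ}(φ ≻ γᵢ), I_a(φ ≻ γ)) is a theorem. -/
theorem generalized_ra (m : ℕ) (hm : 2 ≤ m)
    (I : Fin m → Formula → Formula) (hI : IsIFamily m I)
    (n : ℕ) (hn : 1 ≤ n) (as : Fin n → Fin m) (a : Fin m)
    (φ : Formula) (γ : Fin n → Formula) (δ : Formula)
    (h : ∀ b : Fin m,
      Thm m I (nestImp n (fun j => I (odotIdx (as j) b) (γ j)) (I (odotIdx a b) δ))) :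
    Thm m I (nestImp n (fun j => I (as j) (.cond φ (γ j))) (I a (.cond φ δ))) := by
  classical
  obtain ⟨P, hP1, hP2⟩ := hI
  set σF : ℕ → Formula := sigF n γ δ with hσFdef
  set γ' : Fin m → Formula := fun j => PForm.subst σF (qPF as j) with hγ'def
  have hsF_lt : ∀ i : Fin n, σF i.1 = γ i := by
    intro i
    rw [hσFdef]
    simp [sigF, i.isLt]
  have hsF_n : σF n = δ := by
    rw [hσFdef]; simp [sigF]
  have hsF_n1 : σF (n+1) = .var 0 := by
    rw [hσFdef, sigF]
    rw [dif_neg (by omega), if_neg (by omega)]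
  -- Step A : the premises of rule R_a
  have stepA : ∀ b : Fin m,
      Thm m I (nestImp m (fun j => I (odotIdx (revIdx j) b) (γ' j)) (I (odotIdx a b) δ)) := by
    intro b
    have ht := Thm.taut (m := m) (I := I) _ σF (bigb_taut hm P hP2 as a b)
    have eL : PForm.subst σF (pnest n (fun i => Papp P (odotIdx (as i) b) (.var i.1))
        (Papp P (odotIdx a b) (.var n))) =
        nestImp n (fun i => I (odotIdx (as i) b) (γ i)) (I (odotIdx a b) δ) := by
      rw [subst_pnest]
      congr 1
      · funext i
        rw [subst_Papp P hP1]
        show I _ (σF i.1) = _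
        rw [hsF_lt i]
      · rw [subst_Papp P hP1]
        show I _ (σF n) = _
        rw [hsF_n]
    have eR : PForm.subst σF (pnest m (fun j => Papp P (odotIdx (revIdx j) b) (qPF as j))
        (Papp P (odotIdx a b) (.var n))) =
        nestImp m (fun j => I (odotIdx (revIdx j) b) (γ' j)) (I (odotIdx a b) δ) := by
      rw [subst_pnest]
      congr 1
      · funext j
        rw [subst_Papp P hP1]
      · rw [subst_Papp P hP1]
        show I _ (σF n) = _
        rw [hsF_n]
    rw [show PForm.subst σF (.imp (pnest n (fun i => Papp P (odotIdx (as i) b) (.var i.1))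
        (Papp P (odotIdx a b) (.var n)))
        (pnest m (fun j => Papp P (odotIdx (revIdx j) b) (qPF as j))
        (Papp P (odotIdx a b) (.var n)))) =
        .imp (PForm.subst σF (pnest n (fun i => Papp P (odotIdx (as i) b) (.var i.1))
          (Papp P (odotIdx a b) (.var n))))
        (PForm.subst σF (pnest m (fun j => Papp P (odotIdx (revIdx j) b) (qPF as j))
          (Papp P (odotIdx a b) (.var n)))) from rfl, eL, eR] at ht
    exact Thm.mp _ _ ht (h b)
  -- apply the rule R_a
  have Cthm := Thm.ra a φ γ' δ stepA
  -- Step B : transfer to the conclusion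
  set σF2 : ℕ → Formula := sigF2 n γ γ' φ δ with hσF2def
  have hs2_lt : ∀ i : Fin n, σF2 i.1 = .cond φ (γ i) := by
    intro i
    rw [hσF2def]
    simp [sigF2, i.isLt]
  have hs2_n : σF2 n = .cond φ δ := by
    rw [hσF2def]; simp [sigF2]
  have hs2_j : ∀ j : Fin m, σF2 (n+1+j.1) = .cond φ (γ' j) := by
    intro j
    rw [hσF2def, sigF2]
    rw [dif_neg (by omega), if_neg (by omega), dif_pos (show n+1+j.1-(n+1) < m by
      have := j.isLt; omega)]
    exact congrArg (fun z => Formula.cond φ (γ' z))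
      (Fin.ext (show n+1+(j:ℕ)-(n+1) = (j:ℕ) by omega))
  have hypthm : ∀ j : Fin m, Thm m I (PForm.subst σF2 (hypPF as j)) := by
    intro j
    by_cases hc : clsL as j = []
    · rw [hypPF, if_pos hc]
      show Thm m I (σF2 (n+1+j.1))
      rw [hs2_j j]
      have hγ'j : γ' j = .imp (.var 0) (.var 0) := by
        rw [hγ'def]
        show PForm.subst σF (qPF as j) = _
        rw [qPF, if_pos hc]
        show Formula.imp (σF (n+1)) (σF (n+1)) = _
        rw [hsF_n1]
      rw [hγ'j]
      exact Thm.a3 φ 0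
    · rw [hypPF, if_neg hc]
      show Thm m I (.imp (PForm.subst σF2 (pconjl (clsL as j))) (σF2 (n+1+j.1)))
      rw [subst_pconjl, hs2_j j]
      have hγ'j : γ' j = Fconj σF (clsL as j) := by
        rw [hγ'def]
        show PForm.subst σF (qPF as j) = _
        rw [qPF, if_neg hc, subst_pconjl]
      have hcong : Fconj σF2 (clsL as j) = Fconj (fun k => .cond φ (σF k)) (clsL as j) := by
        apply Fconj_congr _ _ _ hc
        intro k hk
        obtain ⟨i, _, rfl⟩ := (mem_clsL as j k).mp hk
        rw [hs2_lt i, hsF_lt i]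
      rw [hcong, hγ'j]
      exact conj_chain hm σF φ (clsL as j) hc
  have htheta := Thm.taut (m := m) (I := I) _ σF2 (theta_taut hm P hP2 n as a)
  have hdis := thm_foldr_discharge σF2
    ((List.finRange m).flatMap (fun j => List.replicate (m-1) (hypPF as j)))
    (.imp (pnest m (fun j => Papp P (revIdx j) (.var (n+1+j))) (Papp P a (.var n)))
      (pnest n (fun i => Papp P (as i) (.var i.1)) (Papp P a (.var n))))
    htheta
    (fun p hp => by
      obtain ⟨j, _, hp'⟩ := List.mem_flatMap.mp hp
      rw [List.eq_of_mem_replicate hp']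
      exact hypthm j)
  have eC : PForm.subst σF2 (pnest m (fun j => Papp P (revIdx j) (.var (n+1+j)))
      (Papp P a (.var n))) =
      nestImp m (fun j => I (revIdx j) (.cond φ (γ' j))) (I a (.cond φ δ)) := by
    rw [subst_pnest]
    congr 1
    · funext j
      rw [subst_Papp P hP1]
      show I _ (σF2 (n+1+j.1)) = _
      rw [hs2_j j]
    · rw [subst_Papp P hP1]
      show I _ (σF2 n) = _
      rw [hs2_n]
  have eT : PForm.subst σF2 (pnest n (fun i => Papp P (as i) (.var i.1))
      (Papp P a (.var n))) =
      nestImp n (fun i => I (as i) (.cond φ (γ i))) (I a (.cond φ δ)) := by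
    rw [subst_pnest]
    congr 1
    · funext i
      rw [subst_Papp P hP1]
      show I _ (σF2 i.1) = _
      rw [hs2_lt i]
    · rw [subst_Papp P hP1]
      show I _ (σF2 n) = _
      rw [hs2_n]
  rw [show PForm.subst σF2 (.imp (pnest m (fun j => Papp P (revIdx j) (.var (n+1+j)))
      (Papp P a (.var n)))
      (pnest n (fun i => Papp P (as i) (.var i.1)) (Papp P a (.var n)))) =
      .imp (PForm.subst σF2 (pnest m (fun j => Papp P (revIdx j) (.var (n+1+j)))
        (Papp P a (.var n))))
      (PForm.subst σF2 (pnest n (fun i => Papp P (as i) (.var i.1))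
        (Papp P a (.var n)))) from rfl, eC, eT] at hdis
  exact Thm.mp _ _ hdis Cthm

end LCR
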